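/- For every v ∈ Ni ∩ Nk, |B(V, Nk, v)| = |B(Ri, Ni, v)| · ( Σ_{u ∈ Nj \ Nk} |A(Rj, Nj, u)| + Σ_{u ∈ Nj ∩ Nk, u > v} |B(Rj, Nj, u)| + |C(Rj, Nj)| ). (The cardinality recurrence for B used in the counting algorithm.) -/

import Mathlib

variable {V : Type*}

/-- `u` is dominated by the set `S`: some `s ∈ S` equals `u` or is adjacent to `u`. -/
def DomBy (G : SimpleGraph V) (S : Finset V) (u : V) : Prop :=
  ∃ s ∈ S, s = u ∨ G.Adj s u

/-- `S` dominates `U`. -/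
def Dominates (G : SimpleGraph V) (S U : Finset V) : Prop :=
  ∀ u ∈ U, DomBy G S u

variable [LinearOrder V]

/-- `𝒮(R,N)`: subsets of the region `R` dominating `R \ N`. -/
def Scol (G : SimpleGraph V) (R N : Finset V) : Set (Finset V) :=
  {S | S ⊆ R ∧ Dominates G S (R \ N)}

/-- `A(R,N,v)`: members of `𝒮(R,N)` whose intersection with `N` is nonempty with maximum `v`. -/
def setA (G : SimpleGraph V) (R N : Finset V) (v : V) : Set (Finset V) :=
  {S | S ∈ Scol G R N ∧ v ∈ S ∩ N ∧ ∀ u ∈ S ∩ N, u ≤ v}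

/-- `B(R,N,v)`: members of `𝒮(R,N)` disjoint from `N`, with `v` the minimum vertex of `N`
not dominated. -/
def setB (G : SimpleGraph V) (R N : Finset V) (v : V) : Set (Finset V) :=
  {S | S ∈ Scol G R N ∧ S ∩ N = ∅ ∧ v ∈ N ∧ ¬ DomBy G S v ∧ ∀ u ∈ N, ¬ DomBy G S u → v ≤ u}

/-- `C(R,N)`: members of `𝒮(R,N)` disjoint from `N` that dominate all of `N`. -/
def setC (G : SimpleGraph V) (R N : Finset V) : Set (Finset V) :=
  {S | S ∈ Scol G R N ∧ S ∩ N = ∅ ∧ Dominates G S N}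

lemma myncard_prod {α β : Type*} (s : Set α) (t : Set β) :
    (s ×ˢ t).ncard = s.ncard * t.ncard := by
  rw [← Nat.card_coe_set_eq, ← Nat.card_coe_set_eq, ← Nat.card_coe_set_eq,
    Nat.card_congr (Equiv.Set.prod s t), Nat.card_prod]

lemma myncard_biUnion {α β : Type*} [Finite β] (f : α → Set β) :
    ∀ (s : Finset α), (∀ a ∈ s, ∀ b ∈ s, a ≠ b → Disjoint (f a) (f b)) →
      (⋃ a ∈ s, f a).ncard = ∑ a ∈ s, (f a).ncard := by
  classical
  intro s
  induction s using Finset.induction_on with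
  | empty => simp
  | insert a s ha ih =>
    intro h
    rw [Finset.set_biUnion_insert, Finset.sum_insert ha,
      Set.ncard_union_eq ?_ (Set.toFinite _) (Set.toFinite _),
      ih fun x hx y hy hxy => h x (Finset.mem_insert_of_mem hx) y (Finset.mem_insert_of_mem hy) hxy]
    rw [Set.disjoint_iUnion_right]
    intro i
    rw [Set.disjoint_iUnion_right]
    intro hi
    exact h a (Finset.mem_insert_self a s) i (Finset.mem_insert_of_mem hi)
      (fun he => ha (he ▸ hi))

omit [LinearOrder V] in
lemma domBy_mono {G : SimpleGraph V} {S S' : Finset V} {u : V} (h : S ⊆ S')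
    (hd : DomBy G S u) : DomBy G S' u := by
  obtain ⟨s, hs, hd⟩ := hd
  exact ⟨s, h hs, hd⟩

/-- The cardinality recurrence for `B` used in the counting algorithm. -/
theorem card_recurrence_B [Fintype V] (G : SimpleGraph V) (Ri Rj Ni Nj Nk : Finset V)
    (hdisj : Disjoint Ri Rj) (huniv : Ri ∪ Rj = Finset.univ)
    (hNiRi : Ni ⊆ Ri) (hNjRj : Nj ⊆ Rj) (hNk : Nk ⊆ Ni ∪ Nj)
    (hNi : G.IsClique (Ni : Set V)) (hNj : G.IsClique (Nj : Set V))
    (hNkc : G.IsClique (Nk : Set V))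
    (hcross : ∀ a ∈ Ri, ∀ b ∈ Rj, G.Adj a b → a ∈ Nk ∧ b ∈ Nk)
    (horder : ∀ u ∈ (Ni ∪ Nj) \ Nk, ∀ w ∈ Nk, u < w) :
    ∀ v ∈ Ni ∩ Nk,
      (setB G Finset.univ Nk v).ncard =
        (setB G Ri Ni v).ncard *
          ((∑ u ∈ Nj \ Nk, (setA G Rj Nj u).ncard) +
           (∑ u ∈ (Nj ∩ Nk).filter (fun u => v < u), (setB G Rj Nj u).ncard) +
           (setC G Rj Nj).ncard) := by
  classical
  intro v hv
  rw [Finset.mem_inter] at hv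
  obtain ⟨hvNi, hvNk⟩ := hv
  have hdis : ∀ x : V, x ∈ Ri → x ∈ Rj → False :=
    fun x hx hx' => Finset.disjoint_left.mp hdisj hx hx'
  have hmemV : ∀ x : V, x ∈ Ri ∨ x ∈ Rj := by
    intro x
    have : x ∈ Ri ∪ Rj := huniv ▸ Finset.mem_univ x
    exact Finset.mem_union.mp this
  have hNkRi : ∀ x ∈ Nk, x ∈ Ri → x ∈ Ni := by
    intro x hx hxR
    rcases Finset.mem_union.mp (hNk hx) with h | h
    · exact h
    · exact absurd (hNjRj h) (fun h' => hdis x hxR h')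
  have hNkRj : ∀ x ∈ Nk, x ∈ Rj → x ∈ Nj := by
    intro x hx hxR
    rcases Finset.mem_union.mp (hNk hx) with h | h
    · exact absurd (hNiRi h) (fun h' => hdis x h' hxR)
    · exact h
  -- cross-domination lemma
  have hcrji : ∀ s u : V, s ∈ Rj → u ∈ Ri → (s = u ∨ G.Adj s u) → s ∈ Nk := by
    intro s u hs hu h
    rcases h with rfl | h
    · exact absurd hu (fun hu' => hdis s hu' hs)
    · exact (hcross u hu s hs h.symm).2
  have hcrij : ∀ s u : V, s ∈ Ri → u ∈ Rj → (s = u ∨ G.Adj s u) → s ∈ Nk := by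
    intro s u hs hu h
    rcases h with rfl | h
    · exact absurd hu (fun hu' => hdis s hs hu')
    · exact (hcross s hs u hu h).1
  have hvRi : v ∈ Ri := hNiRi hvNi
  -- the three pieces on the Rj side
  set T1 : Set (Finset V) := ⋃ u ∈ Nj \ Nk, setA G Rj Nj u with hT1
  set T2 : Set (Finset V) :=
    ⋃ u ∈ (Nj ∩ Nk).filter (fun u => v < u), setB G Rj Nj u with hT2
  set T3 : Set (Finset V) := setC G Rj Nj with hT3
  set T : Set (Finset V) := T1 ∪ (T2 ∪ T3) with hT
  have hTsub : ∀ Sj ∈ T, Sj ⊆ Rj := by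
    intro Sj hSj
    rcases hSj with hSj | hSj | hSj
    · simp only [hT1, Set.mem_iUnion] at hSj
      obtain ⟨u, _, hSj⟩ := hSj
      exact hSj.1.1
    · simp only [hT2, Set.mem_iUnion] at hSj
      obtain ⟨u, _, hSj⟩ := hSj
      exact hSj.1.1
    · exact hSj.1.1
  -- the key bijection
  have key : setB G Finset.univ Nk v =
      (fun p : Finset V × Finset V => p.1 ∪ p.2) '' ((setB G Ri Ni v) ×ˢ T) := by
    ext S
    constructor
    · rintro ⟨⟨-, hdom⟩, hSNk, -, hvnd, hmin⟩
      have hSNk' : ∀ s ∈ S, s ∉ Nk := by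
        intro s hs hsk
        exact Finset.eq_empty_iff_forall_notMem.mp hSNk s (Finset.mem_inter.mpr ⟨hs, hsk⟩)
      have domsplit_i : ∀ u ∈ Ri, DomBy G S u → DomBy G (S ∩ Ri) u := by
        rintro u hu ⟨s, hs, hd⟩
        rcases hmemV s with hsi | hsj
        · exact ⟨s, Finset.mem_inter.mpr ⟨hs, hsi⟩, hd⟩
        · exact absurd (hcrji s u hsj hu hd) (hSNk' s hs)
      have domsplit_j : ∀ u ∈ Rj, DomBy G S u → DomBy G (S ∩ Rj) u := by
        rintro u hu ⟨s, hs, hd⟩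
        rcases hmemV s with hsi | hsj
        · exact absurd (hcrij s u hsi hu hd) (hSNk' s hs)
        · exact ⟨s, Finset.mem_inter.mpr ⟨hs, hsj⟩, hd⟩
      have hdomall : ∀ u : V, u ∉ Nk → DomBy G S u := by
        intro u hu
        exact hdom u (Finset.mem_sdiff.mpr ⟨Finset.mem_univ u, hu⟩)
      refine ⟨(S ∩ Ri, S ∩ Rj), ⟨?_, ?_⟩, ?_⟩
      · -- S ∩ Ri ∈ setB G Ri Ni v
        have hSNi : ∀ s ∈ S, s ∉ Ni := by
          intro s hs hsNi
          have hsk : s ∉ Nk := hSNk' s hs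
          have hlt : s < v := horder s
            (Finset.mem_sdiff.mpr ⟨Finset.mem_union_left _ hsNi, hsk⟩) v hvNk
          exact hvnd ⟨s, hs, Or.inr (hNi (Finset.mem_coe.mpr hsNi)
            (Finset.mem_coe.mpr hvNi) (ne_of_lt hlt))⟩
        refine ⟨⟨Finset.inter_subset_right, ?_⟩, ?_, hvNi, ?_, ?_⟩
        · intro u hu
          rw [Finset.mem_sdiff] at hu
          have huk : u ∉ Nk := fun h => hu.2 (hNkRi u h hu.1)
          exact domsplit_i u hu.1 (hdomall u huk)
        · rw [Finset.eq_empty_iff_forall_notMem]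
          intro s hs
          rw [Finset.mem_inter, Finset.mem_inter] at hs
          exact hSNi s hs.1.1 hs.2
        · exact fun h => hvnd (domBy_mono Finset.inter_subset_left h)
        · intro u huNi hund
          by_cases huk : u ∈ Nk
          · refine hmin u huk (fun h => hund (domsplit_i u (hNiRi huNi) h))
          · exact absurd (domsplit_i u (hNiRi huNi) (hdomall u huk)) hund
      · -- S ∩ Rj ∈ T
        have hScolj : S ∩ Rj ∈ Scol G Rj Nj := by
          refine ⟨Finset.inter_subset_right, ?_⟩
          intro u hu
          rw [Finset.mem_sdiff] at hu
          have huk : u ∉ Nk := fun h => hu.2 (hNkRj u h hu.1)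
          exact domsplit_j u hu.1 (hdomall u huk)
        have hdomNjNk : ∀ u ∈ Nj, u ∉ Nk → DomBy G (S ∩ Rj) u :=
          fun u hu huk => domsplit_j u (hNjRj hu) (hdomall u huk)
        rcases (S ∩ Rj ∩ Nj).eq_empty_or_nonempty with hem | hne
        · -- cases B and C
          by_cases hdomNj : Dominates G (S ∩ Rj) Nj
          · exact Or.inr (Or.inr ⟨hScolj, hem, hdomNj⟩)
          · have hUne : (Nj.filter (fun u => ¬ DomBy G (S ∩ Rj) u)).Nonempty := by
              rw [Dominates] at hdomNj
              push_neg at hdomNj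
              obtain ⟨u, hu, hud⟩ := hdomNj
              exact ⟨u, Finset.mem_filter.mpr ⟨hu, hud⟩⟩
            set u := (Nj.filter (fun u => ¬ DomBy G (S ∩ Rj) u)).min' hUne with hu_def
            have humem := Finset.min'_mem _ hUne
            rw [Finset.mem_filter] at humem
            obtain ⟨huNj, hund⟩ := humem
            have humin : ∀ w ∈ Nj, ¬ DomBy G (S ∩ Rj) w → u ≤ w := by
              intro w hw hwd
              exact Finset.min'_le _ w (Finset.mem_filter.mpr ⟨hw, hwd⟩)
            have huk : u ∈ Nk := by
              by_contra huk
              exact hund (hdomNjNk u huNj huk)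
            have hundS : ¬ DomBy G S u :=
              fun h => hund (domsplit_j u (hNjRj huNj) h)
            have hvu : v < u := by
              refine lt_of_le_of_ne (hmin u huk hundS) ?_
              intro he
              exact hdis v hvRi (he ▸ hNjRj huNj)
            refine Or.inr (Or.inl ?_)
            simp only [hT2, Set.mem_iUnion]
            exact ⟨u, Finset.mem_filter.mpr ⟨Finset.mem_inter.mpr ⟨huNj, huk⟩, hvu⟩,
              hScolj, hem, huNj, hund, humin⟩
        · -- case A
          set u := (S ∩ Rj ∩ Nj).max' hne with hu_def
          have humem := Finset.max'_mem _ hne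
          rw [Finset.mem_inter] at humem
          obtain ⟨huSRj, huNj⟩ := humem
          have huk : u ∉ Nk := hSNk' u (Finset.mem_inter.mp huSRj).1
          refine Or.inl ?_
          simp only [hT1, Set.mem_iUnion]
          exact ⟨u, Finset.mem_sdiff.mpr ⟨huNj, huk⟩, hScolj,
            Finset.mem_inter.mpr ⟨huSRj, huNj⟩,
            fun w hw => Finset.le_max' _ w hw⟩
      · -- the union recovers S
        show S ∩ Ri ∪ S ∩ Rj = S
        rw [← Finset.inter_union_distrib_left, huniv, Finset.inter_univ]
    · rintro ⟨⟨Si, Sj⟩, ⟨hSi, hSj⟩, rfl⟩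
      obtain ⟨⟨hSiR, hSidom⟩, hSiNi, -, hvndi, hmini⟩ := hSi
      have hSiNk : ∀ s ∈ Si, s ∉ Nk := by
        intro s hs hsk
        exact Finset.eq_empty_iff_forall_notMem.mp hSiNi s
          (Finset.mem_inter.mpr ⟨hs, hNkRi s hsk (hSiR hs)⟩)
      have hSidomNiNk : ∀ u ∈ Ni, u ∉ Nk → DomBy G Si u := by
        intro x hx hxk
        by_contra hxd
        have := hmini x hx hxd
        exact absurd (horder x (Finset.mem_sdiff.mpr ⟨Finset.mem_union_left _ hx, hxk⟩)
          v hvNk) (not_lt.mpr this)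
      -- extract the common facts about Sj in each case
      have hSjfacts : Sj ⊆ Rj ∧ Dominates G Sj (Rj \ Nj) ∧ (∀ s ∈ Sj, s ∉ Nk) ∧
          (∀ x ∈ Nj, x ∉ Nk → DomBy G Sj x) ∧
          (∀ w ∈ Nj, w ∈ Nk → ¬ DomBy G Sj w → v ≤ w) := by
        rcases hSj with hSj | hSj | hSj
        · -- case A
          simp only [hT1, Set.mem_iUnion] at hSj
          obtain ⟨u, huk, ⟨hSjR, hSjdom⟩, huSj, humax⟩ := hSj
          rw [Finset.mem_sdiff] at huk
          rw [Finset.mem_inter] at huSj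
          have hdomNj : ∀ w ∈ Nj, DomBy G Sj w := by
            intro w hw
            by_cases hew : u = w
            · exact ⟨u, huSj.1, Or.inl hew⟩
            · exact ⟨u, huSj.1, Or.inr (hNj (Finset.mem_coe.mpr huSj.2)
                (Finset.mem_coe.mpr hw) hew)⟩
          refine ⟨hSjR, hSjdom, ?_, fun x hx _ => hdomNj x hx,
            fun w hw _ hwd => absurd (hdomNj w hw) hwd⟩
          intro s hs hsk
          have hsNj : s ∈ Nj := hNkRj s hsk (hSjR hs)
          have hle : s ≤ u := humax s (Finset.mem_inter.mpr ⟨hs, hsNj⟩)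
          exact absurd (horder u (Finset.mem_sdiff.mpr
            ⟨Finset.mem_union_right _ huk.1, huk.2⟩) s hsk) (not_lt.mpr hle)
        · -- case B
          simp only [hT2, Set.mem_iUnion] at hSj
          obtain ⟨u, humem, ⟨hSjR, hSjdom⟩, hSjNj, huNj, hund, humin⟩ := hSj
          rw [Finset.mem_filter, Finset.mem_inter] at humem
          obtain ⟨⟨-, huk⟩, hvu⟩ := humem
          have hSjNj' : ∀ s ∈ Sj, s ∉ Nj := by
            intro s hs hsNj
            exact Finset.eq_empty_iff_forall_notMem.mp hSjNj s
              (Finset.mem_inter.mpr ⟨hs, hsNj⟩)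
          refine ⟨hSjR, hSjdom, fun s hs hsk => hSjNj' s hs (hNkRj s hsk (hSjR hs)),
            ?_, fun w hw _ hwd => le_of_lt (lt_of_lt_of_le hvu (humin w hw hwd))⟩
          intro x hx hxk
          by_contra hxd
          have := humin x hx hxd
          exact absurd (horder x (Finset.mem_sdiff.mpr
            ⟨Finset.mem_union_right _ hx, hxk⟩) u huk) (not_lt.mpr this)
        · -- case C
          obtain ⟨⟨hSjR, hSjdom⟩, hSjNj, hdomNj⟩ := hSj
          have hSjNj' : ∀ s ∈ Sj, s ∉ Nj := by
            intro s hs hsNj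
            exact Finset.eq_empty_iff_forall_notMem.mp hSjNj s
              (Finset.mem_inter.mpr ⟨hs, hsNj⟩)
          exact ⟨hSjR, hSjdom, fun s hs hsk => hSjNj' s hs (hNkRj s hsk (hSjR hs)),
            fun x hx _ => hdomNj x hx, fun w hw _ hwd => absurd (hdomNj w hw) hwd⟩
      obtain ⟨hSjR, hSjdom, hSjNk, hSjdomNjNk, hSjlast⟩ := hSjfacts
      refine ⟨⟨Finset.subset_univ _, ?_⟩, ?_, hvNk, ?_, ?_⟩
      · -- Si ∪ Sj dominates univ \ Nk
        intro x hx
        have hxk : x ∉ Nk := (Finset.mem_sdiff.mp hx).2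
        rcases hmemV x with hxi | hxj
        · by_cases hxNi : x ∈ Ni
          · exact domBy_mono Finset.subset_union_left (hSidomNiNk x hxNi hxk)
          · exact domBy_mono Finset.subset_union_left
              (hSidom x (Finset.mem_sdiff.mpr ⟨hxi, hxNi⟩))
        · by_cases hxNj : x ∈ Nj
          · exact domBy_mono Finset.subset_union_right (hSjdomNjNk x hxNj hxk)
          · exact domBy_mono Finset.subset_union_right
              (hSjdom x (Finset.mem_sdiff.mpr ⟨hxj, hxNj⟩))
      · -- (Si ∪ Sj) ∩ Nk = ∅
        rw [Finset.eq_empty_iff_forall_notMem]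
        intro s hs
        rw [Finset.mem_inter, Finset.mem_union] at hs
        rcases hs.1 with h | h
        · exact hSiNk s h hs.2
        · exact hSjNk s h hs.2
      · -- v not dominated
        rintro ⟨s, hs, hd⟩
        rcases Finset.mem_union.mp hs with h | h
        · exact hvndi ⟨s, h, hd⟩
        · exact hSjNk s h (hcrji s v (hSjR h) hvRi hd)
      · -- minimality
        intro w hwk hwnd
        rcases hmemV w with hwi | hwj
        · exact hmini w (hNkRi w hwk hwi)
            (fun h => hwnd (domBy_mono Finset.subset_union_left h))
        · exact hSjlast w (hNkRj w hwk hwj) hwk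
            (fun h => hwnd (domBy_mono Finset.subset_union_right h))
  -- injectivity
  have hinj : Set.InjOn (fun p : Finset V × Finset V => p.1 ∪ p.2)
      ((setB G Ri Ni v) ×ˢ T) := by
    rintro ⟨a, b⟩ ⟨ha, hb⟩ ⟨c, d⟩ ⟨hc, hd⟩ he
    simp only at he
    have haR : a ⊆ Ri := ha.1.1
    have hcR : c ⊆ Ri := hc.1.1
    have hbR : b ⊆ Rj := hTsub b hb
    have hdR : d ⊆ Rj := hTsub d hd
    have h1 : ∀ (x y : Finset V), x ⊆ Ri → y ⊆ Rj → (x ∪ y) ∩ Ri = x := by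
      intro x y hx hy
      rw [Finset.union_inter_distrib_right, Finset.inter_eq_left.mpr hx,
        Finset.union_eq_left]
      intro s hs
      rw [Finset.mem_inter] at hs
      exact absurd hs.2 (fun h => hdis s h (hy hs.1))
    have h2 : ∀ (x y : Finset V), x ⊆ Ri → y ⊆ Rj → (x ∪ y) ∩ Rj = y := by
      intro x y hx hy
      rw [Finset.union_inter_distrib_right, Finset.inter_eq_left.mpr hy,
        Finset.union_eq_right]
      intro s hs
      rw [Finset.mem_inter] at hs
      exact absurd hs.2 (fun h => hdis s (hx hs.1) h)
    have hac : a = c := by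
      rw [← h1 a b haR hbR, ← h1 c d hcR hdR, he]
    have hbd : b = d := by
      rw [← h2 a b haR hbR, ← h2 c d hcR hdR, he]
    exact Prod.ext hac hbd
  rw [key, Set.ncard_image_of_injOn hinj, myncard_prod]
  congr 1
  -- now compute T.ncard
  have hd23 : Disjoint T2 T3 := by
    rw [Set.disjoint_left]
    intro S hS2 hS3
    simp only [hT2, Set.mem_iUnion] at hS2
    obtain ⟨u, humem, -, -, huNj, hund, -⟩ := hS2
    exact hund (hS3.2.2 u huNj)
  have hd123 : Disjoint T1 (T2 ∪ T3) := by
    rw [Set.disjoint_left]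
    intro S hS1 hS23
    simp only [hT1, Set.mem_iUnion] at hS1
    obtain ⟨u, -, -, huS, -⟩ := hS1
    have hem : S ∩ Nj = ∅ := by
      rcases hS23 with h | h
      · simp only [hT2, Set.mem_iUnion] at h
        obtain ⟨w, -, -, hem, -⟩ := h
        exact hem
      · exact h.2.1
    exact Finset.eq_empty_iff_forall_notMem.mp hem u huS
  rw [hT, Set.ncard_union_eq hd123 (Set.toFinite _) (Set.toFinite _),
    Set.ncard_union_eq hd23 (Set.toFinite _) (Set.toFinite _)]
  have hA : T1.ncard = ∑ u ∈ Nj \ Nk, (setA G Rj Nj u).ncard := by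
    rw [hT1]
    apply myncard_biUnion
    intro a _ b _ hab
    rw [Set.disjoint_left]
    rintro S ⟨-, haS, hamax⟩ ⟨-, hbS, hbmax⟩
    exact hab (le_antisymm (hbmax a haS) (hamax b hbS))
  have hB : T2.ncard =
      ∑ u ∈ (Nj ∩ Nk).filter (fun u => v < u), (setB G Rj Nj u).ncard := by
    rw [hT2]
    apply myncard_biUnion
    intro a _ b _ hab
    rw [Set.disjoint_left]
    rintro S ⟨-, -, haN, hand, hamin⟩ ⟨-, -, hbN, hbnd, hbmin⟩
    exact hab (le_antisymm (hamin b hbN hbnd) (hbmin a haN hand))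
  rw [hA, hB, hT3]
  ring
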